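/- Let M be a Riemannian hypersurface with positive definite second fundamental form II(X,Y) = g(AX,Y), and suppose the Levi-Civita connections of g and II coincide. Then at any point p, for any g-orthonormal eigenbasis E₁,...,E_m of the shape operator A with eigenvalues λ₁,...,λ_m, the sectional curvature of II satisfies K^{II}(E_i,E_j) = (1/λ_i)·K(E_i,E_j) for all i ≠ j, where K is the sectional curvature of g. -/

import Mathlib

open scoped RealInnerProductSpace

/-- if the Levi-Civita connections of `g` and `II` coincide (so the curvature
tensors coincide: `R = R^{II}`, which is the common tensor `R` below, given vector-valued),
then for a `g`-orthonormal eigenbasis `E₁,…,E_m` of the positive definite symmetric shape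
operator `A` with eigenvalues `λᵢ > 0`, the sectional curvature of `II`,
`K^{II}(Eᵢ,Eⱼ) = II(R(Eᵢ,Eⱼ)Eᵢ,Eⱼ)/(II(Eᵢ,Eᵢ)·II(Eⱼ,Eⱼ))`, equals `(1/λᵢ)·K(Eᵢ,Eⱼ)`
where `K(Eᵢ,Eⱼ) = ⟪R(Eᵢ,Eⱼ)Eᵢ, Eⱼ⟫` (the `g`-sectional curvature for orthonormal vectors). -/
theorem stmt_6 {m : ℕ}
    (A : EuclideanSpace ℝ (Fin m) →ₗ[ℝ] EuclideanSpace ℝ (Fin m))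
    (hA : ∀ x y : EuclideanSpace ℝ (Fin m), ⟪A x, y⟫ = ⟪x, A y⟫)
    (E : Fin m → EuclideanSpace ℝ (Fin m)) (hE : Orthonormal ℝ E)
    (lam : Fin m → ℝ) (hlam : ∀ i, 0 < lam i)
    (heig : ∀ i, A (E i) = lam i • E i)
    (R : EuclideanSpace ℝ (Fin m) → EuclideanSpace ℝ (Fin m) →
      EuclideanSpace ℝ (Fin m) → EuclideanSpace ℝ (Fin m)) :
    ∀ i j, i ≠ j →
      ⟪A (R (E i) (E j) (E i)), E j⟫ / (⟪A (E i), E i⟫ * ⟪A (E j), E j⟫)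
        = (1 / lam i) * ⟪R (E i) (E j) (E i), E j⟫ := by
  intro i j hij
  have hnorm : ∀ k, ⟪E k, E k⟫ = (1:ℝ) := fun k => by
    have h := hE.1 k
    have : ⟪E k, E k⟫ = ‖E k‖ ^ 2 := real_inner_self_eq_norm_sq _
    rw [this, h, one_pow]
  have h1 : ⟪A (E i), E i⟫ = lam i := by
    rw [heig, real_inner_smul_left, hnorm, mul_one]
  have h2 : ⟪A (E j), E j⟫ = lam j := by
    rw [heig, real_inner_smul_left, hnorm, mul_one]
  have h3 : ⟪A (R (E i) (E j) (E i)), E j⟫ = lam j * ⟪R (E i) (E j) (E i), E j⟫ := by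
    rw [hA, heig, real_inner_smul_right]
  rw [h1, h2, h3]
  have hli := (hlam i).ne'
  have hlj := (hlam j).ne'
  field_simp
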